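/- The filter system $\{\phi^d\}\cup\{\psi^d_{j,k}\}$ (all translates) forms a frame for $\ell^2(\mathbb{Z}^2)$ with frame bounds $A=\min_{\xi}\hat\Psi^d(\xi)$ and $B=\max_{\xi}\hat\Psi^d(\xi)$: for all $f\in\ell^2(\mathbb{Z}^2)$, $A\|f\|_2^2 \le \|f*\overline{\phi^d}\|_2^2 + \sum_{j,k}\|f*\overline{\psi^d_{j,k}}\|_2^2 \le B\|f\|_2^2$, where $\hat\Psi^d(\xi)=|\hat\phi^d(\xi)|^2+\sum_{j,k}|\hat\psi^d_{j,k}(\xi)|^2$. -/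

import Mathlib

open scoped Real ENNReal

noncomputable section
namespace FrameAux

def ex (k : ℤ) (t : ℝ) : ℂ := Complex.exp (-2 * (π:ℂ) * Complex.I * (k * t))

def char (n : ℤ × ℤ) (ξ : ℝ × ℝ) : ℂ :=
  Complex.exp (-2 * (π : ℂ) * Complex.I *
    ((n.1 : ℂ) * (ξ.1 : ℂ) + (n.2 : ℂ) * (ξ.2 : ℂ)))

lemma char_eq (n : ℤ × ℤ) (x y : ℝ) : char n (x, y) = ex n.1 x * ex n.2 y := by
  rw [char, ex, ex, ← Complex.exp_add]; ring_nf

lemma conj_ex (k : ℤ) (t : ℝ) : (starRingEnd ℂ) (ex k t) = ex (-k) t := by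
  rw [ex, ex, ← Complex.exp_conj]
  congr 1
  simp only [map_mul, map_neg, map_ofNat, Complex.conj_ofReal, Complex.conj_I, map_intCast]
  push_cast
  ring

lemma ex_mul_ex (a b : ℤ) (t : ℝ) : ex a t * ex b t = ex (a + b) t := by
  rw [ex, ex, ex, ← Complex.exp_add]; push_cast; ring_nf

lemma continuous_ex (k : ℤ) : Continuous fun t => ex k t := by
  unfold ex; fun_prop

lemma continuous_char (n : ℤ × ℤ) : Continuous fun ξ => char n ξ := by
  unfold char; fun_prop

lemma integral_ex (k : ℤ) : (∫ t in (0:ℝ)..1, ex k t) = if k = 0 then 1 else 0 := by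
  rcases eq_or_ne k 0 with h | h
  · simp [h, ex]
  · rw [if_neg h]
    have hc : (-2 * (π:ℂ) * Complex.I * k) ≠ 0 := by
      simp [Complex.I_ne_zero, Real.pi_ne_zero, h, Complex.ofReal_ne_zero]
    have key := integral_exp_mul_complex (a := 0) (b := 1) hc
    have heq : ∀ t : ℝ, ex k t = Complex.exp (-2 * (π:ℂ) * Complex.I * k * t) := by
      intro t; rw [ex]; ring_nf
    have h1 : (-2 * (π:ℂ) * Complex.I * k * ((1:ℝ):ℂ)) = (((-k : ℤ):ℂ)) * (2 * π * Complex.I) := by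
      push_cast; ring
    have h2 : Complex.exp ((((-k : ℤ):ℂ)) * (2 * π * Complex.I)) = 1 :=
      Complex.exp_int_mul_two_pi_mul_I (-k)
    rw [intervalIntegral.integral_congr (g := fun t : ℝ => Complex.exp (-2 * (π:ℂ) * Complex.I * k * t)) (fun t _ => heq t), key, h1, h2]
    simp

def hat (s : Finset (ℤ × ℤ)) (f : ℤ × ℤ → ℂ) (ξ : ℝ × ℝ) : ℂ :=
  ∑ n ∈ s, f n * char n ξ

lemma continuous_hat (s : Finset (ℤ × ℤ)) (f : ℤ × ℤ → ℂ) :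
    Continuous fun ξ => hat s f ξ := by
  unfold hat
  exact continuous_finset_sum _ fun n _ => continuous_const.mul (continuous_char n)

lemma pair_eq (n m : ℤ × ℤ) (x y : ℝ) :
    char n (x, y) * (starRingEnd ℂ) (char m (x, y)) =
      ex (n.1 - m.1) x * ex (n.2 - m.2) y := by
  rw [char_eq, char_eq, map_mul, conj_ex, conj_ex]
  calc ex n.1 x * ex n.2 y * (ex (-m.1) x * ex (-m.2) y)
      = (ex n.1 x * ex (-m.1) x) * (ex n.2 y * ex (-m.2) y) := by ring
    _ = _ := by rw [ex_mul_ex, ex_mul_ex, sub_eq_add_neg, sub_eq_add_neg]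

/-- Parseval for finite trigonometric sums, complex form. -/
lemma parseval_c (s : Finset (ℤ × ℤ)) (f : ℤ × ℤ → ℂ) :
    (∫ x in (0:ℝ)..1, ∫ y in (0:ℝ)..1,
        hat s f (x, y) * (starRingEnd ℂ) (hat s f (x, y))) =
      ((∑ m ∈ s, ‖f m‖ ^ 2 : ℝ) : ℂ) := by
  have expand : ∀ x y : ℝ, hat s f (x, y) * (starRingEnd ℂ) (hat s f (x, y)) =
      ∑ p ∈ s ×ˢ s, (f p.1 * (starRingEnd ℂ) (f p.2) * ex (p.1.1 - p.2.1) x)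
        * ex (p.1.2 - p.2.2) y := by
    intro x y
    rw [hat, map_sum, Finset.sum_mul_sum, ← Finset.sum_product']
    refine Finset.sum_congr rfl fun p _ => ?_
    rw [map_mul]
    calc f p.1 * char p.1 (x, y) * ((starRingEnd ℂ) (f p.2) * (starRingEnd ℂ) (char p.2 (x, y))) 
        = f p.1 * (starRingEnd ℂ) (f p.2) * (char p.1 (x,y) * (starRingEnd ℂ) (char p.2 (x,y))) := by ring
      _ = _ := by rw [pair_eq]; ring
  have inner : ∀ x : ℝ, (∫ y in (0:ℝ)..1,
      hat s f (x, y) * (starRingEnd ℂ) (hat s f (x, y))) =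
      ∑ p ∈ s ×ˢ s, (f p.1 * (starRingEnd ℂ) (f p.2) *
        (if p.1.2 = p.2.2 then 1 else 0)) * ex (p.1.1 - p.2.1) x := by
    intro x
    rw [intervalIntegral.integral_congr (fun y _ => expand x y),
      intervalIntegral.integral_finset_sum (fun p _ =>
        show IntervalIntegrable (fun t => f p.1 * (starRingEnd ℂ) (f p.2) * ex (p.1.1 - p.2.1) x
          * ex (p.1.2 - p.2.2) t) _ _ _ from
        (continuous_const.mul (continuous_ex _)).intervalIntegrable _ _)]
    refine Finset.sum_congr rfl fun p _ => ?_
    rw [intervalIntegral.integral_const_mul, integral_ex]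
    simp only [sub_eq_zero]
    split <;> ring
  rw [intervalIntegral.integral_congr (fun x _ => inner x),
    intervalIntegral.integral_finset_sum (fun p _ =>
      show IntervalIntegrable (fun t => (f p.1 * (starRingEnd ℂ) (f p.2) *
        (if p.1.2 = p.2.2 then 1 else 0)) * ex (p.1.1 - p.2.1) t) _ _ _ from
      (continuous_const.mul (continuous_ex _)).intervalIntegrable _ _)]
  have : ∀ p ∈ s ×ˢ s, (∫ x in (0:ℝ)..1, (f p.1 * (starRingEnd ℂ) (f p.2) *
        (if p.1.2 = p.2.2 then 1 else 0)) * ex (p.1.1 - p.2.1) x) =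
      if p.1 = p.2 then f p.1 * (starRingEnd ℂ) (f p.1) else 0 := by
    intro p _
    rw [intervalIntegral.integral_const_mul, integral_ex]
    simp only [sub_eq_zero]
    rcases eq_or_ne p.1 p.2 with h | h
    · rw [if_pos h, if_pos, if_pos, h]; ring
      · rw [h]
      · rw [h]
    · rw [if_neg h]
      rcases eq_or_ne p.1.1 p.2.1 with h1 | h1
      · have h2 : p.1.2 ≠ p.2.2 := fun h2 => h (Prod.ext h1 h2)
        rw [if_neg h2]; ring
      · rw [if_neg h1]; ring
  rw [Finset.sum_congr rfl this, Finset.sum_product]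
  push_cast
  refine Finset.sum_congr rfl fun n hn => ?_
  rw [Finset.sum_ite_eq s n (fun _ => f n * (starRingEnd ℂ) (f n)), if_pos hn,
    Complex.mul_conj]
  norm_cast
  simp [Complex.normSq_eq_norm_sq]

/-- Parseval, real form. -/
lemma parseval_r (s : Finset (ℤ × ℤ)) (f : ℤ × ℤ → ℂ) :
    (∫ x in (0:ℝ)..1, ∫ y in (0:ℝ)..1, ‖hat s f (x, y)‖ ^ 2) = ∑ m ∈ s, ‖f m‖ ^ 2 := by
  have key : ∀ ξ : ℝ × ℝ, ((‖hat s f ξ‖ ^ 2 : ℝ) : ℂ) =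
      hat s f ξ * (starRingEnd ℂ) (hat s f ξ) := by
    intro ξ
    rw [Complex.mul_conj]
    norm_cast
    simp [Complex.normSq_eq_norm_sq]
  have H := parseval_c s f
  have h1 : ∀ x : ℝ, (∫ y in (0:ℝ)..1, hat s f (x, y) * (starRingEnd ℂ) (hat s f (x, y))) =
      (((∫ y in (0:ℝ)..1, ‖hat s f (x, y)‖ ^ 2) : ℝ) : ℂ) := by
    intro x
    rw [← intervalIntegral.integral_ofReal]
    exact intervalIntegral.integral_congr fun y _ => (key (x, y)).symm
  rw [intervalIntegral.integral_congr (fun x _ => h1 x),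
    intervalIntegral.integral_ofReal] at H
  exact_mod_cast H

lemma conj_char (n : ℤ × ℤ) (ξ : ℝ × ℝ) :
    (starRingEnd ℂ) (char n ξ) = char (-n) ξ := by
  rw [char, char, ← Complex.exp_conj]
  congr 1
  simp only [map_mul, map_add, map_neg, map_ofNat, Complex.conj_ofReal, Complex.conj_I,
    map_intCast, Prod.fst_neg, Prod.snd_neg]
  push_cast
  ring

lemma char_mul_char (a b : ℤ × ℤ) (ξ : ℝ × ℝ) :
    char a ξ * char b ξ = char (a + b) ξ := by
  rw [char, char, char, ← Complex.exp_add]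
  congr 1
  simp only [Prod.fst_add, Prod.snd_add]
  push_cast
  ring

def conv (sg : Finset (ℤ × ℤ)) (g f : ℤ × ℤ → ℂ) (m : ℤ × ℤ) : ℂ :=
  ∑ n ∈ sg, (starRingEnd ℂ) (g n) * f (m + n)

lemma tsum_conv (sg : Finset (ℤ × ℤ)) (g f : ℤ × ℤ → ℂ)
    (hg : Function.support g ⊆ ↑sg) (m : ℤ × ℤ) :
    ∑' q : ℤ × ℤ, f q * (starRingEnd ℂ) (g (q - m)) = conv sg g f m := by
  have hsupp : ∀ q ∉ sg.image (fun n => m + n), f q * (starRingEnd ℂ) (g (q - m)) = 0 := by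
    intro q hq
    have : g (q - m) = 0 := by
      by_contra h
      exact hq (Finset.mem_image.mpr ⟨q - m, hg h, by rw [add_comm, sub_add_cancel]⟩)
    simp [this]
  rw [tsum_eq_sum hsupp, Finset.sum_image (fun a _ b _ h => by
    simpa using h)]
  exact Finset.sum_congr rfl fun n _ => by rw [add_sub_cancel_left]; ring

lemma support_conv (s sg : Finset (ℤ × ℤ)) (g f : ℤ × ℤ → ℂ)
    (hf : Function.support f ⊆ ↑s) (m : ℤ × ℤ)
    (hm : m ∉ (s ×ˢ sg).image fun p => p.1 - p.2) : conv sg g f m = 0 := by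
  apply Finset.sum_eq_zero
  intro n hn
  have : f (m + n) = 0 := by
    by_contra h
    exact hm (Finset.mem_image.mpr ⟨(m + n, n), Finset.mem_product.mpr ⟨hf h, hn⟩, add_sub_cancel_right _ _⟩)
  simp [this]

lemma hat_conv (s sg : Finset (ℤ × ℤ)) (g f : ℤ × ℤ → ℂ)
    (hf : Function.support f ⊆ ↑s) (hg : Function.support g ⊆ ↑sg) (ξ : ℝ × ℝ) :
    hat ((s ×ˢ sg).image fun p => p.1 - p.2) (conv sg g f) ξ =
      hat s f ξ * (starRingEnd ℂ) (hat sg g ξ) := by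
  set t := (s ×ˢ sg).image (fun p : (ℤ × ℤ) × (ℤ × ℤ) => p.1 - p.2) with ht
  have rhs : hat s f ξ * (starRingEnd ℂ) (hat sg g ξ) =
      ∑ n ∈ sg, ∑ q ∈ s, (starRingEnd ℂ) (g n) * f q * char (q - n) ξ := by
    rw [hat, hat, map_sum, Finset.sum_mul_sum, Finset.sum_comm]
    refine Finset.sum_congr rfl fun n _ => Finset.sum_congr rfl fun q _ => ?_
    rw [map_mul, conj_char]
    calc f q * char q ξ * ((starRingEnd ℂ) (g n) * char (-n) ξ)
        = (starRingEnd ℂ) (g n) * f q * (char q ξ * char (-n) ξ) := by ring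
      _ = _ := by rw [char_mul_char, sub_eq_add_neg]
  have lhs : hat t (conv sg g f) ξ =
      ∑ n ∈ sg, ∑ m ∈ t, (starRingEnd ℂ) (g n) * f (m + n) * char m ξ := by
    rw [hat]
    have step : ∀ m ∈ t, conv sg g f m * char m ξ =
        ∑ n ∈ sg, (starRingEnd ℂ) (g n) * f (m + n) * char m ξ := fun m _ => by
      rw [conv, Finset.sum_mul]
    rw [Finset.sum_congr rfl step, Finset.sum_comm]
  rw [lhs, rhs]
  refine Finset.sum_congr rfl fun n hn => ?_
  -- reindex RHS inner sum by m = q - n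
  have rimg : ∑ q ∈ s, (starRingEnd ℂ) (g n) * f q * char (q - n) ξ =
      ∑ m ∈ s.image (fun q => q - n), (starRingEnd ℂ) (g n) * f (m + n) * char m ξ := by
    rw [Finset.sum_image (fun a _ b _ h => by simpa using h)]
    exact Finset.sum_congr rfl fun q _ => by rw [sub_add_cancel]
  rw [rimg]
  -- both sums extend to t ∪ s.image (· - n)
  have key : ∀ m : ℤ × ℤ, (starRingEnd ℂ) (g n) * f (m + n) * char m ξ ≠ 0 →
      m ∈ t ∧ m ∈ s.image (fun q => q - n) := by
    intro m hne
    have hfm : f (m + n) ≠ 0 := fun h => hne (by simp [h])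
    have hms : m + n ∈ s := hf hfm
    constructor
    · exact Finset.mem_image.mpr ⟨(m + n, n), Finset.mem_product.mpr ⟨hms, hn⟩, add_sub_cancel_right _ _⟩
    · exact Finset.mem_image.mpr ⟨m + n, hms, add_sub_cancel_right _ _⟩
  rw [Finset.sum_subset (Finset.subset_union_left (s₂ := s.image (fun q => q - n)))
    (fun m _ hm => by_contra fun hne => hm (key m hne).1),
    Finset.sum_subset (Finset.subset_union_right (s₁ := t))
    (fun m _ hm => by_contra fun hne => hm (key m hne).2)]

/-- Iterated integral over the unit square. -/
def II (F : ℝ × ℝ → ℝ) : ℝ := ∫ x in (0:ℝ)..1, ∫ y in (0:ℝ)..1, F (x, y)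

lemma continuous_inner {F : ℝ × ℝ → ℝ} (hF : Continuous F) :
    Continuous fun x : ℝ => ∫ y in (0:ℝ)..1, F (x, y) := by
  apply intervalIntegral.continuous_parametric_intervalIntegral_of_continuous'
    (f := fun (x : ℝ) (y : ℝ) => F (x, y))
  exact hF.comp continuous_id

lemma II_mono {F G : ℝ × ℝ → ℝ} (hF : Continuous F) (hG : Continuous G)
    (h : ∀ ξ, F ξ ≤ G ξ) : II F ≤ II G := by
  have inner : ∀ x : ℝ, (∫ y in (0:ℝ)..1, F (x, y)) ≤ ∫ y in (0:ℝ)..1, G (x, y) := by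
    intro x
    apply intervalIntegral.integral_mono_on zero_le_one
    · exact (hF.comp (by fun_prop)).intervalIntegrable _ _
    · exact (hG.comp (by fun_prop)).intervalIntegrable _ _
    · exact fun y _ => h (x, y)
  apply intervalIntegral.integral_mono_on zero_le_one
  · exact (continuous_inner hF).intervalIntegrable _ _
  · exact (continuous_inner hG).intervalIntegrable _ _
  · exact fun x _ => inner x

lemma II_const_mul (c : ℝ) (F : ℝ × ℝ → ℝ) :
    II (fun ξ => c * F ξ) = c * II F := by
  rw [II, II, ← intervalIntegral.integral_const_mul]
  exact intervalIntegral.integral_congr fun x _ => by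
    rw [← intervalIntegral.integral_const_mul]

lemma II_add {F G : ℝ × ℝ → ℝ} (hF : Continuous F) (hG : Continuous G) :
    II (fun ξ => F ξ + G ξ) = II F + II G := by
  rw [II, II, II, ← intervalIntegral.integral_add
    ((continuous_inner hF).intervalIntegrable _ _)
    ((continuous_inner hG).intervalIntegrable _ _)]
  refine intervalIntegral.integral_congr fun x _ => ?_
  have h1 : IntervalIntegrable (fun y => F (x, y)) MeasureTheory.volume 0 1 :=
    (hF.comp (Continuous.prodMk_right x)).intervalIntegrable _ _
  have h2 : IntervalIntegrable (fun y => G (x, y)) MeasureTheory.volume 0 1 :=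
    (hG.comp (Continuous.prodMk_right x)).intervalIntegrable _ _
  rw [← intervalIntegral.integral_add h1 h2]

lemma II_sum {ι : Type*} (t : Finset ι) (F : ι → ℝ × ℝ → ℝ)
    (hF : ∀ i, Continuous (F i)) :
    II (fun ξ => ∑ i ∈ t, F i ξ) = ∑ i ∈ t, II (F i) := by
  classical
  induction t using Finset.induction_on with
  | empty => simp [II]
  | insert a tt hni ih =>
    rw [Finset.sum_insert hni, ← ih,
      ← II_add (hF a) (continuous_finset_sum tt fun i _ => hF i)]
    exact congrArg II (funext fun ξ => by rw [Finset.sum_insert hni])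

/-- `∑_m |conv g f m|² = ∫∫ |f̂|² |ĝ|²` for finitely supported `f`. -/
lemma Q_single_eq (s sg : Finset (ℤ × ℤ)) (f g : ℤ × ℤ → ℂ)
    (hf : Function.support f ⊆ ↑s) (hg : Function.support g ⊆ ↑sg) :
    ∑' m : ℤ × ℤ, ‖conv sg g f m‖ ^ 2 =
      II fun ξ => ‖hat s f ξ‖ ^ 2 * ‖hat sg g ξ‖ ^ 2 := by
  set t := (s ×ˢ sg).image (fun p : (ℤ × ℤ) × (ℤ × ℤ) => p.1 - p.2) with ht
  rw [tsum_eq_sum (s := t) (fun m hm => by rw [support_conv s sg g f hf m hm]; simp),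
    ← parseval_r t (conv sg g f)]
  exact intervalIntegral.integral_congr fun x _ =>
    intervalIntegral.integral_congr fun y _ => by
      rw [hat_conv s sg g f hf hg (x, y), norm_mul, mul_pow, RCLike.norm_conj]

lemma N_eq (s : Finset (ℤ × ℤ)) (f : ℤ × ℤ → ℂ) (hf : Function.support f ⊆ ↑s) :
    ∑' m : ℤ × ℤ, ‖f m‖ ^ 2 = II fun ξ => ‖hat s f ξ‖ ^ 2 := by
  rw [tsum_eq_sum (s := s) (fun m hm => by
    rw [Function.notMem_support.mp (fun hs => hm (hf hs))]; simp), ← parseval_r s f]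
  rfl

abbrev E := lp (fun _ : ℤ × ℤ => ℂ) 2

lemma two_toReal : ((2 : ℝ≥0∞)).toReal = (2 : ℝ) := by norm_num

lemma pos_two : 0 < ((2 : ℝ≥0∞)).toReal := by rw [two_toReal]; norm_num

/-- `∑' |F m|² = ‖F‖²` for `F ∈ ℓ²`. -/
lemma sum_sq_eq_norm (F : E) : ∑' m : ℤ × ℤ, ‖F m‖ ^ 2 = ‖F‖ ^ 2 := by
  have h := lp.norm_rpow_eq_tsum pos_two F
  rw [two_toReal] at h
  calc ∑' m : ℤ × ℤ, ‖F m‖ ^ 2 = ∑' m : ℤ × ℤ, ‖F m‖ ^ (2:ℝ) := tsum_congr fun m => by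
        rw [← Real.rpow_natCast ‖F m‖ 2]; norm_num
    _ = ‖F‖ ^ (2:ℝ) := h.symm
    _ = ‖F‖ ^ 2 := by rw [← Real.rpow_natCast ‖F‖ 2]; norm_num

lemma summable_sq (F : E) : Summable fun m : ℤ × ℤ => ‖F m‖ ^ (2:ℝ) := by
  have := (lp.memℓp F).summable pos_two
  rwa [two_toReal] at this

/-- shift: `(shf n F) m = F (m + n)`. -/
def shf (n : ℤ × ℤ) (F : E) : E :=
  ⟨fun m => F (m + n), by
    apply memℓp_gen
    rw [two_toReal]
    exact ((Equiv.addRight n).summable_iff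
      (f := fun m : ℤ × ℤ => ‖F m‖ ^ (2:ℝ))).mpr (by simpa [two_toReal] using summable_sq F)⟩

lemma shf_apply (n : ℤ × ℤ) (F : E) (m : ℤ × ℤ) : (shf n F) m = F (m + n) := rfl

lemma norm_shf (n : ℤ × ℤ) (F : E) : ‖shf n F‖ = ‖F‖ := by
  rw [lp.norm_eq_tsum_rpow pos_two, lp.norm_eq_tsum_rpow pos_two F]
  congr 1
  exact (Equiv.addRight n).tsum_eq (f := fun m : ℤ × ℤ => ‖F m‖ ^ ((2:ℝ≥0∞)).toReal)

/-- The convolution operator on `ℓ²`. -/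
def Tlp (sg : Finset (ℤ × ℤ)) (g : ℤ × ℤ → ℂ) (F : E) : E :=
  ∑ n ∈ sg, (starRingEnd ℂ) (g n) • shf n F

lemma Tlp_apply (sg : Finset (ℤ × ℤ)) (g : ℤ × ℤ → ℂ) (F : E) (m : ℤ × ℤ) :
    (Tlp sg g F) m = conv sg g (⇑F) m := by
  rw [Tlp, conv]
  rw [lp.coeFn_sum]
  simp only [Finset.sum_apply, lp.coeFn_smul, Pi.smul_apply, shf_apply, smul_eq_mul]

lemma Tlp_sub (sg : Finset (ℤ × ℤ)) (g : ℤ × ℤ → ℂ) (F G : E) :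
    Tlp sg g (F - G) = Tlp sg g F - Tlp sg g G := by
  apply lp.ext
  funext m
  rw [lp.coeFn_sub, Pi.sub_apply, Tlp_apply, Tlp_apply, Tlp_apply, conv, conv, conv,
    ← Finset.sum_sub_distrib]
  refine Finset.sum_congr rfl fun n _ => ?_
  rw [lp.coeFn_sub, Pi.sub_apply]
  ring

lemma norm_Tlp_le (sg : Finset (ℤ × ℤ)) (g : ℤ × ℤ → ℂ) (F : E) :
    ‖Tlp sg g F‖ ≤ (∑ n ∈ sg, ‖g n‖) * ‖F‖ := by
  calc ‖Tlp sg g F‖ ≤ ∑ n ∈ sg, ‖(starRingEnd ℂ) (g n) • shf n F‖ := norm_sum_le _ _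
    _ = ∑ n ∈ sg, ‖g n‖ * ‖F‖ := Finset.sum_congr rfl fun n _ => by
        rw [norm_smul, RCLike.norm_conj, norm_shf]
    _ = _ := by rw [← Finset.sum_mul]

lemma continuous_Tlp (sg : Finset (ℤ × ℤ)) (g : ℤ × ℤ → ℂ) :
    Continuous fun F : E => Tlp sg g F := by
  have C0 : 0 ≤ ∑ n ∈ sg, ‖g n‖ := Finset.sum_nonneg fun n _ => norm_nonneg _
  apply (LipschitzWith.of_dist_le_mul (K := Real.toNNReal (∑ n ∈ sg, ‖g n‖))
    (fun F G => ?_)).continuous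
  rw [dist_eq_norm, dist_eq_norm, ← Tlp_sub, Real.coe_toNNReal _ C0]
  exact norm_Tlp_le sg g (F - G)

end FrameAux
end
open scoped Real ENNReal

open FrameAux in
/-- The translates of the filter system `{φᵈ} ∪ {ψᵈ_{j,k}}` form a frame for `ℓ²(ℤ²)` with
frame bounds `A = min_ξ Ψ̂ᵈ(ξ)` and `B = max_ξ Ψ̂ᵈ(ξ)`, where
`Ψ̂ᵈ(ξ) = |φ̂ᵈ(ξ)|² + ∑_{j,k} |ψ̂ᵈ_{j,k}(ξ)|²`. -/
theorem filter_system_frame_bounds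
    {κ : Type*} [Fintype κ]
    (φd : ℤ × ℤ → ℂ) (ψd : κ → ℤ × ℤ → ℂ)
    (hφfin : (Function.support φd).Finite)
    (hψfin : ∀ i, (Function.support (ψd i)).Finite)
    (Fφ : ℝ × ℝ → ℂ) (Fψ : κ → ℝ × ℝ → ℂ)
    (hFφ : ∀ ξ : ℝ × ℝ, Fφ ξ = ∑' n : ℤ × ℤ,
      φd n * Complex.exp (-2 * (π : ℂ) * Complex.I *
        ((n.1 : ℂ) * (ξ.1 : ℂ) + (n.2 : ℂ) * (ξ.2 : ℂ))))
    (hFψ : ∀ (i : κ) (ξ : ℝ × ℝ), Fψ i ξ = ∑' n : ℤ × ℤ,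
      ψd i n * Complex.exp (-2 * (π : ℂ) * Complex.I *
        ((n.1 : ℂ) * (ξ.1 : ℂ) + (n.2 : ℂ) * (ξ.2 : ℂ))))
    (A B : ℝ)
    (hA : IsLeast {y : ℝ | ∃ ξ : ℝ × ℝ, y = ‖Fφ ξ‖ ^ 2 + ∑ i : κ, ‖Fψ i ξ‖ ^ 2} A)
    (hB : IsGreatest {y : ℝ | ∃ ξ : ℝ × ℝ, y = ‖Fφ ξ‖ ^ 2 + ∑ i : κ, ‖Fψ i ξ‖ ^ 2} B) :
    ∀ f : ℤ × ℤ → ℂ, Memℓp f 2 →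
      A * ∑' m : ℤ × ℤ, ‖f m‖ ^ 2 ≤
        (∑' m : ℤ × ℤ, ‖∑' q : ℤ × ℤ, f q * (starRingEnd ℂ) (φd (q - m))‖ ^ 2) +
          ∑ i : κ, ∑' m : ℤ × ℤ, ‖∑' q : ℤ × ℤ, f q * (starRingEnd ℂ) (ψd i (q - m))‖ ^ 2 ∧
      (∑' m : ℤ × ℤ, ‖∑' q : ℤ × ℤ, f q * (starRingEnd ℂ) (φd (q - m))‖ ^ 2) +
          ∑ i : κ, ∑' m : ℤ × ℤ, ‖∑' q : ℤ × ℤ, f q * (starRingEnd ℂ) (ψd i (q - m))‖ ^ 2 ≤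
        B * ∑' m : ℤ × ℤ, ‖f m‖ ^ 2 := by
  classical
  set sφ : Finset (ℤ × ℤ) := hφfin.toFinset with hsφdef
  set sψ : κ → Finset (ℤ × ℤ) := fun i => (hψfin i).toFinset with hsψdef
  have hsφ : Function.support φd ⊆ ↑sφ := fun x hx => hφfin.mem_toFinset.mpr hx
  have hsψ : ∀ i, Function.support (ψd i) ⊆ ↑(sψ i) :=
    fun i x hx => (hψfin i).mem_toFinset.mpr hx
  -- the symbol function
  set Ψ : ℝ × ℝ → ℝ := fun ξ => ‖hat sφ φd ξ‖ ^ 2 + ∑ i : κ, ‖hat (sψ i) (ψd i) ξ‖ ^ 2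
    with hΨdef
  have hΨcont : Continuous Ψ := by
    apply Continuous.add
    · exact (continuous_hat sφ φd).norm.pow 2
    · exact continuous_finset_sum _ fun i _ => (continuous_hat (sψ i) (ψd i)).norm.pow 2
  -- Fφ agrees with the finite Fourier sum
  have hFφ' : ∀ ξ : ℝ × ℝ, Fφ ξ = hat sφ φd ξ := by
    intro ξ
    rw [hFφ ξ, hat]
    refine tsum_eq_sum fun n hn => ?_
    rw [Function.notMem_support.mp (fun h => hn (hφfin.mem_toFinset.mpr h)), zero_mul]
  have hFψ' : ∀ (i : κ) (ξ : ℝ × ℝ), Fψ i ξ = hat (sψ i) (ψd i) ξ := by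
    intro i ξ
    rw [hFψ i ξ, hat]
    refine tsum_eq_sum fun n hn => ?_
    rw [Function.notMem_support.mp (fun h => hn ((hψfin i).mem_toFinset.mpr h)), zero_mul]
  -- pointwise bounds on the symbol
  have hΨA : ∀ ξ, A ≤ Ψ ξ := fun ξ => hA.2 ⟨ξ, by
    rw [hΨdef]; simp only [hFφ' ξ, hFψ' _ ξ]⟩
  have hΨB : ∀ ξ, Ψ ξ ≤ B := fun ξ => hB.2 ⟨ξ, by
    rw [hΨdef]; simp only [hFφ' ξ, hFψ' _ ξ]⟩
  -- the finite-support case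
  have FIN : ∀ f : ℤ × ℤ → ℂ, (Function.support f).Finite →
      A * ∑' m : ℤ × ℤ, ‖f m‖ ^ 2 ≤
        (∑' m : ℤ × ℤ, ‖conv sφ φd f m‖ ^ 2) +
          ∑ i : κ, ∑' m : ℤ × ℤ, ‖conv (sψ i) (ψd i) f m‖ ^ 2 ∧
      (∑' m : ℤ × ℤ, ‖conv sφ φd f m‖ ^ 2) +
          ∑ i : κ, ∑' m : ℤ × ℤ, ‖conv (sψ i) (ψd i) f m‖ ^ 2 ≤
        B * ∑' m : ℤ × ℤ, ‖f m‖ ^ 2 := by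
    intro f hffin
    set s : Finset (ℤ × ℤ) := hffin.toFinset with hsdef
    have hfs : Function.support f ⊆ ↑s := fun x hx => hffin.mem_toFinset.mpr hx
    have hcont_h : Continuous fun ξ : ℝ × ℝ => ‖hat s f ξ‖ ^ 2 :=
      (continuous_hat s f).norm.pow 2
    have hN : ∑' m : ℤ × ℤ, ‖f m‖ ^ 2 = II fun ξ => ‖hat s f ξ‖ ^ 2 := N_eq s f hfs
    have hQ : (∑' m : ℤ × ℤ, ‖conv sφ φd f m‖ ^ 2) +
        ∑ i : κ, ∑' m : ℤ × ℤ, ‖conv (sψ i) (ψd i) f m‖ ^ 2 =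
        II fun ξ => ‖hat s f ξ‖ ^ 2 * Ψ ξ := by
      rw [Q_single_eq s sφ f φd hfs hsφ,
        Finset.sum_congr rfl fun i _ => Q_single_eq s (sψ i) f (ψd i) hfs (hsψ i),
        ← II_sum Finset.univ
          (fun i ξ => ‖hat s f ξ‖ ^ 2 * ‖hat (sψ i) (ψd i) ξ‖ ^ 2)
          (fun i => hcont_h.mul ((continuous_hat (sψ i) (ψd i)).norm.pow 2)),
        ← II_add (F := fun ξ => ‖hat s f ξ‖ ^ 2 * ‖hat sφ φd ξ‖ ^ 2)
          (G := fun ξ => ∑ i, ‖hat s f ξ‖ ^ 2 * ‖hat (sψ i) (ψd i) ξ‖ ^ 2)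
          (hcont_h.mul ((continuous_hat sφ φd).norm.pow 2))
          (continuous_finset_sum _ fun i _ =>
            hcont_h.mul ((continuous_hat (sψ i) (ψd i)).norm.pow 2))]
      refine congrArg II (funext fun ξ => ?_)
      rw [hΨdef, mul_add, Finset.mul_sum]
    constructor
    · rw [hN, hQ, ← II_const_mul A]
      refine II_mono (continuous_const.mul hcont_h) (hcont_h.mul hΨcont) fun ξ => ?_
      rw [mul_comm]
      exact mul_le_mul_of_nonneg_left (hΨA ξ) (by positivity)
    · rw [hN, hQ, ← II_const_mul B]
      refine II_mono (hcont_h.mul hΨcont) (continuous_const.mul hcont_h) fun ξ => ?_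
      rw [mul_comm (B : ℝ)]
      exact mul_le_mul_of_nonneg_left (hΨB ξ) (by positivity)
  -- the ℓ² quadratic form
  haveI : Fact ((1:ℝ≥0∞) ≤ 2) := ⟨by norm_num⟩
  set S : E → ℝ := fun G => ‖Tlp sφ φd G‖ ^ 2 + ∑ i : κ, ‖Tlp (sψ i) (ψd i) G‖ ^ 2
    with hSdef
  have hScont : Continuous S := by
    apply Continuous.add
    · exact ((continuous_Tlp sφ φd).norm.pow 2)
    · exact continuous_finset_sum _ fun i _ => ((continuous_Tlp (sψ i) (ψd i)).norm.pow 2)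
  -- transfer FIN through the lp identifications, for elements with finitely supported coords
  have FINlp : ∀ G : E, (Function.support (⇑G)).Finite →
      A * ‖G‖ ^ 2 ≤ S G ∧ S G ≤ B * ‖G‖ ^ 2 := by
    intro G hGfin
    have e0 : ∑' m : ℤ × ℤ, ‖G m‖ ^ 2 = ‖G‖ ^ 2 := sum_sq_eq_norm G
    have e1 : ∑' m : ℤ × ℤ, ‖conv sφ φd (⇑G) m‖ ^ 2 = ‖Tlp sφ φd G‖ ^ 2 := by
      rw [← sum_sq_eq_norm (Tlp sφ φd G)]
      exact tsum_congr fun m => by rw [Tlp_apply]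
    have e2 : ∀ i : κ, ∑' m : ℤ × ℤ, ‖conv (sψ i) (ψd i) (⇑G) m‖ ^ 2 =
        ‖Tlp (sψ i) (ψd i) G‖ ^ 2 := by
      intro i
      rw [← sum_sq_eq_norm (Tlp (sψ i) (ψd i) G)]
      exact tsum_congr fun m => by rw [Tlp_apply]
    obtain ⟨h1, h2⟩ := FIN (⇑G) hGfin
    rw [e0, e1, Finset.sum_congr rfl fun i _ => e2 i] at h1 h2
    exact ⟨h1, h2⟩
  -- extend to all of ℓ² by density
  have MAIN : ∀ G : E, A * ‖G‖ ^ 2 ≤ S G ∧ S G ≤ B * ‖G‖ ^ 2 := by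
    intro G
    have hclosed : IsClosed {H : E | A * ‖H‖ ^ 2 ≤ S H ∧ S H ≤ B * ‖H‖ ^ 2} := by
      apply IsClosed.inter
      · exact isClosed_le (continuous_const.mul (continuous_norm.pow 2)) hScont
      · exact isClosed_le hScont (continuous_const.mul (continuous_norm.pow 2))
    have htend := lp.hasSum_single (E := fun _ : ℤ × ℤ => ℂ) (p := 2) (by norm_num) G
    rw [HasSum] at htend
    refine hclosed.mem_of_tendsto htend (Filter.Eventually.of_forall fun t => ?_)
    apply FINlp
    refine Set.Finite.subset t.finite_toSet fun j hj => ?_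
    by_contra hjt
    refine hj ?_
    show (∑ i ∈ t, lp.single 2 i (G i)) j = 0
    rw [lp.coeFn_sum, Finset.sum_apply]
    exact Finset.sum_eq_zero fun i hi => lp.single_apply_ne 2 i _ (fun h => hjt (h ▸ hi))
  -- conclude
  intro f hf
  set F : E := ⟨f, hf⟩ with hFdef
  have eφ : ∑' m : ℤ × ℤ, ‖∑' q : ℤ × ℤ, f q * (starRingEnd ℂ) (φd (q - m))‖ ^ 2 =
      ‖Tlp sφ φd F‖ ^ 2 := by
    rw [← sum_sq_eq_norm (Tlp sφ φd F)]
    refine tsum_congr fun m => ?_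
    rw [Tlp_apply, tsum_conv sφ φd f hsφ m]
  have eψ : ∀ i : κ, ∑' m : ℤ × ℤ, ‖∑' q : ℤ × ℤ, f q * (starRingEnd ℂ) (ψd i (q - m))‖ ^ 2 =
      ‖Tlp (sψ i) (ψd i) F‖ ^ 2 := by
    intro i
    rw [← sum_sq_eq_norm (Tlp (sψ i) (ψd i) F)]
    refine tsum_congr fun m => ?_
    rw [Tlp_apply, tsum_conv (sψ i) (ψd i) f (hsψ i) m]
  have e0 : ∑' m : ℤ × ℤ, ‖f m‖ ^ 2 = ‖F‖ ^ 2 := sum_sq_eq_norm F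
  obtain ⟨H1, H2⟩ := MAIN F
  rw [hSdef] at H1 H2
  simp only at H1 H2
  rw [e0, eφ, Finset.sum_congr rfl fun i _ => eψ i]
  exact ⟨H1, H2⟩
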